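/- Every second-countable Hausdorff finite-dimensional smooth real manifold M without boundary admits a family 𝒰 of closed subsets of M whose interiors cover M and such that the intersection of any nonempty finite subfamily of 𝒰 is either empty or contractible (hence, in particular, empty or acyclic); that is, M has a good closed cover. -/

import Mathlib

open scoped Manifold ContDiff RealInnerProductSpace
open Set Metric Filter Topology

noncomputable section

variable {E : Type*} [NormedAddCommGroup E] [InnerProductSpace ℝ E] [ProperSpace E]

/-- Abstract second-derivative convexity estimate. -/
theorem convexOn_normsq_comp (ψ : E → E) (W : Set E) (hW : Convex ℝ W) (c : E)
    (G : E → E →L[ℝ] E) (H : E → E →L[ℝ] E →L[ℝ] E)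
    (hψd : ∀ y ∈ W, HasFDerivAt ψ (G y) y) (hGd : ∀ y ∈ W, HasFDerivAt G (H y) y)
    (hψc : ContinuousOn ψ W)
    (Cφ C2 ε : ℝ) (hCφpos : 0 < Cφ) (hC2nn : 0 ≤ C2) (hεpos : 0 < ε)
    (hb : ∀ y ∈ W, ∀ v : E, ‖v‖ ≤ Cφ * ‖G y v‖) (hH : ∀ y ∈ W, ‖H y‖ ≤ C2)
    (hεsmall : ε * (C2 * Cφ ^ 2) ≤ 1) (hψε : ∀ y ∈ W, ‖ψ y - c‖ ≤ ε) :
    ConvexOn ℝ W (fun y => ‖ψ y - c‖ ^ 2) := by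
  simp only [← real_inner_self_eq_norm_sq]
  refine ⟨hW, ?_⟩
  intro x0 hx0 x1 hx1 s t hs ht hst
  set v := x1 - x0 with hv_def
  set ℓ : ℝ → E := fun τ => x0 + τ • v with hℓ_def
  have hℓmem : ∀ τ ∈ Icc (0:ℝ) 1, ℓ τ ∈ W := fun τ hτ =>
    hW.add_smul_sub_mem hx0 hx1 hτ
  set p : ℝ → E := fun τ => ψ (ℓ τ) - c with hp_def
  set p' : ℝ → E := fun τ => (G (ℓ τ)) v with hp'_def
  set p'' : ℝ → E := fun τ => ((H (ℓ τ)) v) v with hp''_def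
  have hℓd : ∀ τ : ℝ, HasDerivAt ℓ v τ := by
    intro τ
    have := ((hasDerivAt_id τ).smul_const v).const_add x0
    rw [one_smul] at this; exact this
  have hpd : ∀ τ ∈ Icc (0:ℝ) 1, HasDerivAt p (p' τ) τ := by
    intro τ hτ
    exact ((hψd _ (hℓmem τ hτ)).comp_hasDerivAt τ (hℓd τ)).sub_const c
  have hp'd : ∀ τ ∈ Icc (0:ℝ) 1, HasDerivAt p' (p'' τ) τ := by
    intro τ hτ
    have h1 : HasDerivAt (fun τ => G (ℓ τ)) ((H (ℓ τ)) v) τ :=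
      (hGd _ (hℓmem τ hτ)).comp_hasDerivAt τ (hℓd τ)
    simpa using h1.clm_apply (hasDerivAt_const τ v)
  set u : ℝ → ℝ := fun τ => ⟪p τ, p τ⟫ with hu_def
  set u' : ℝ → ℝ := fun τ => 2 * ⟪p τ, p' τ⟫ with hu'_def
  have hud : ∀ τ ∈ Icc (0:ℝ) 1, HasDerivAt u (u' τ) τ := by
    intro τ hτ
    have h2 := (hpd τ hτ).inner ℝ (hpd τ hτ)
    have h2' : ⟪p τ, p' τ⟫ + ⟪p' τ, p τ⟫ = u' τ := by
      simp only [hu'_def]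
      rw [real_inner_comm (p' τ) (p τ)]; ring
    rwa [h2'] at h2
  have hu'd : ∀ τ ∈ Icc (0:ℝ) 1,
      HasDerivAt u' (2 * (⟪p' τ, p' τ⟫ + ⟪p τ, p'' τ⟫)) τ := by
    intro τ hτ
    have h3 := ((hpd τ hτ).inner ℝ (hp'd τ hτ)).const_mul 2
    have h3' : 2 * (⟪p τ, p'' τ⟫ + ⟪p' τ, p' τ⟫) = 2 * (⟪p' τ, p' τ⟫ + ⟪p τ, p'' τ⟫) := by ring
    rwa [h3'] at h3
  have hnn : ∀ τ ∈ Icc (0:ℝ) 1, 0 ≤ 2 * (⟪p' τ, p' τ⟫ + ⟪p τ, p'' τ⟫) := by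
    intro τ hτ
    have hm := hℓmem τ hτ
    have b1 : ‖p τ‖ ≤ ε := hψε _ hm
    have b2 : ‖p'' τ‖ ≤ C2 * (‖v‖ * ‖v‖) := by
      simp only [hp''_def]
      calc ‖((H (ℓ τ)) v) v‖ ≤ ‖(H (ℓ τ)) v‖ * ‖v‖ := ContinuousLinearMap.le_opNorm _ _
      _ ≤ (‖H (ℓ τ)‖ * ‖v‖) * ‖v‖ :=
          mul_le_mul_of_nonneg_right (ContinuousLinearMap.le_opNorm _ _) (norm_nonneg _)
      _ ≤ (C2 * ‖v‖) * ‖v‖ :=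
          mul_le_mul_of_nonneg_right
            (mul_le_mul_of_nonneg_right (hH _ hm) (norm_nonneg _)) (norm_nonneg _)
      _ = C2 * (‖v‖ * ‖v‖) := by ring
    have b3 : ‖v‖ ≤ Cφ * ‖p' τ‖ := hb _ hm v
    have e1 : ⟪p' τ, p' τ⟫ = ‖p' τ‖ ^ 2 := real_inner_self_eq_norm_sq _
    have e2 : -(‖p τ‖ * ‖p'' τ‖) ≤ ⟪p τ, p'' τ⟫ := by
      have h9 := abs_real_inner_le_norm (p τ) (p'' τ)
      have h10 := neg_abs_le (⟪p τ, p'' τ⟫)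
      linarith [h9, h10]
    have b4 : ‖p τ‖ * ‖p'' τ‖ ≤ ε * (C2 * (‖v‖ * ‖v‖)) :=
      mul_le_mul b1 b2 (norm_nonneg _) hεpos.le
    have h5 : ‖v‖ * ‖v‖ ≤ Cφ ^ 2 * ‖p' τ‖ ^ 2 := by
      calc ‖v‖ * ‖v‖ ≤ (Cφ * ‖p' τ‖) * (Cφ * ‖p' τ‖) :=
            mul_self_le_mul_self (norm_nonneg v) b3
      _ = Cφ ^ 2 * ‖p' τ‖ ^ 2 := by ring
    have h8 : ε * (C2 * (‖v‖ * ‖v‖)) ≤ ε * (C2 * (Cφ ^ 2 * ‖p' τ‖ ^ 2)) :=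
      mul_le_mul_of_nonneg_left (mul_le_mul_of_nonneg_left h5 hC2nn) hεpos.le
    have h9' : ε * (C2 * (Cφ ^ 2 * ‖p' τ‖ ^ 2)) = (ε * (C2 * Cφ ^ 2)) * ‖p' τ‖ ^ 2 := by
      ring
    have h10' : (ε * (C2 * Cφ ^ 2)) * ‖p' τ‖ ^ 2 ≤ 1 * ‖p' τ‖ ^ 2 :=
      mul_le_mul_of_nonneg_right hεsmall (sq_nonneg _)
    have h7 : ε * (C2 * (‖v‖ * ‖v‖)) ≤ ‖p' τ‖ ^ 2 := by
      rw [h9'] at h8; linarith [h8, h10']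
    linarith [e2, b4, h7, e1.ge, e1.le]
  have hcontu : ContinuousOn u (Icc (0:ℝ) 1) := by
    have hℓc : ContinuousOn ℓ (Icc (0:ℝ) 1) :=
      (continuous_const.add (continuous_id.smul continuous_const)).continuousOn
    have hpc : ContinuousOn p (Icc (0:ℝ) 1) :=
      (hψc.comp hℓc fun τ hτ => hℓmem τ hτ).sub continuousOn_const
    exact hpc.inner hpc
  have hcvx : ConvexOn ℝ (Icc (0:ℝ) 1) u := by
    apply convexOn_of_hasDerivWithinAt2_nonneg (convex_Icc 0 1) hcontu
      (f' := u') (f'' := fun τ => 2 * (⟪p' τ, p' τ⟫ + ⟪p τ, p'' τ⟫))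
    · intro τ hτ
      exact (hud τ (interior_subset hτ)).hasDerivWithinAt
    · intro τ hτ
      exact (hu'd τ (interior_subset hτ)).hasDerivWithinAt
    · intro τ hτ
      exact hnn τ (interior_subset hτ)
  have h01 : (0:ℝ) ∈ Icc (0:ℝ) 1 := ⟨le_refl 0, zero_le_one⟩
  have h11 : (1:ℝ) ∈ Icc (0:ℝ) 1 := ⟨zero_le_one, le_refl 1⟩
  have hineq := hcvx.2 h01 h11 hs ht hst
  have hu0 : u 0 = ⟪ψ x0 - c, ψ x0 - c⟫ := by simp [hu_def, hp_def, hℓ_def]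
  have hu1 : u 1 = ⟪ψ x1 - c, ψ x1 - c⟫ := by simp [hu_def, hp_def, hℓ_def, hv_def]
  have harg : s • (0:ℝ) + t • (1:ℝ) = t := by simp
  have hpt : ℓ t = s • x0 + t • x1 := by
    have hs' : s = 1 - t := by linarith
    rw [hℓ_def]; simp only [hv_def, hs']
    module
  rw [harg] at hineq
  have hut : u t = ⟪ψ (s • x0 + t • x1) - c, ψ (s • x0 + t • x1) - c⟫ := by
    rw [hu_def]; simp only [hp_def, hpt]
  rw [hut, hu0, hu1] at hineq
  simpa [smul_eq_mul] using hineq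

theorem convex_image_closedBall_eventually (e : OpenPartialHomeomorph E E)
    (he : ContDiffOn ℝ ∞ e e.source) (he' : ContDiffOn ℝ ∞ e.symm e.target)
    {c : E} (hc : c ∈ e.source) :
    ∀ᶠ r in 𝓝[>] (0:ℝ), closedBall c r ⊆ e.source ∧
      Convex ℝ (e '' closedBall c r) := by
  have hone : (1 : WithTop ℕ∞) ≤ ∞ := by exact_mod_cast le_top
  have hsucc : ∞ + 1 ≤ (∞ : WithTop ℕ∞) := le_of_eq rfl
  obtain ⟨a, hac⟩ : ∃ a, (e : E → E) c = a := ⟨_, rfl⟩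
  have ha : a ∈ e.target := hac ▸ e.map_source hc
  have hψa : e.symm a = c := hac ▸ e.left_inv hc
  obtain ⟨G, hG⟩ : ∃ G, fderiv ℝ (e.symm : E → E) = G := ⟨_, rfl⟩
  obtain ⟨F, hF⟩ : ∃ F, fderiv ℝ (e : E → E) = F := ⟨_, rfl⟩
  have hψdiff : ∀ y ∈ e.target, HasFDerivAt (e.symm : E → E) (G y) y := fun y hy => hG ▸
    ((he'.differentiableOn (by simp)).differentiableAt (e.open_target.mem_nhds hy)).hasFDerivAt
  have hFdiff : ∀ x ∈ e.source, HasFDerivAt (e : E → E) (F x) x := fun x hx => hF ▸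
    ((he.differentiableOn (by simp)).differentiableAt (e.open_source.mem_nhds hx)).hasFDerivAt
  have hGcd : ContDiffOn ℝ ∞ G e.target := hG ▸ he'.fderiv_of_isOpen e.open_target hsucc
  obtain ⟨H, hH⟩ : ∃ H, fderiv ℝ G = H := ⟨_, rfl⟩
  have hGdiff : ∀ y ∈ e.target, HasFDerivAt G (H y) y := fun y hy => hH ▸
    ((hGcd.differentiableOn (by simp)).differentiableAt (e.open_target.mem_nhds hy)).hasFDerivAt
  have hHcont : ContinuousOn H e.target := hH ▸
    hGcd.continuousOn_fderiv_of_isOpen e.open_target hone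
  have hFcont : ContinuousOn F e.source := hF ▸
    he.continuousOn_fderiv_of_isOpen e.open_source hone
  -- chain rule identity
  have key : ∀ y ∈ e.target, ∀ v : E, (F (e.symm y)) ((G y) v) = v := by
    intro y hy v
    have h1 : HasFDerivAt ((e : E → E) ∘ (e.symm : E → E))
        ((F (e.symm y)).comp (G y)) y :=
      (hFdiff _ (e.map_target hy)).comp y (hψdiff y hy)
    have h2 : ((e : E → E) ∘ (e.symm : E → E)) =ᶠ[𝓝 y] id := by
      filter_upwards [e.open_target.mem_nhds hy] with z hz
      exact e.right_inv hz
    have h3 : ((F (e.symm y)).comp (G y)) = ContinuousLinearMap.id ℝ E :=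
      (h1.congr_of_eventuallyEq h2.symm).unique (hasFDerivAt_id y)
    have := DFunLike.congr_fun h3 v
    simpa using this
  -- compact ball inside target
  obtain ⟨δ₁, hδ₁, hKT⟩ : ∃ δ₁ > 0, closedBall a δ₁ ⊆ e.target := by
    rcases Metric.isOpen_iff.1 e.open_target a ha with ⟨s, hs, hball⟩
    exact ⟨s/2, by positivity, (closedBall_subset_ball (by linarith)).trans hball⟩
  have hKcomp : IsCompact (closedBall a δ₁) := isCompact_closedBall a δ₁
  have hKne : (closedBall a δ₁).Nonempty := ⟨a, mem_closedBall_self hδ₁.le⟩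
  -- first derivative bound
  obtain ⟨Cφ, h1Cφ, hCφ⟩ :
      ∃ Cφ, 1 ≤ Cφ ∧ ∀ y ∈ closedBall a δ₁, ‖F (e.symm y)‖ ≤ Cφ := by
    have hcont1 : ContinuousOn (fun y => ‖F (e.symm y)‖) (closedBall a δ₁) :=
      (hFcont.comp (e.continuousOn_symm.mono hKT) fun y hy => e.map_target (hKT hy)).norm
    obtain ⟨y₀, -, hy₀⟩ := hKcomp.exists_isMaxOn hKne hcont1
    exact ⟨max 1 ‖F (e.symm y₀)‖, le_max_left _ _,
      fun y hy => (hy₀ hy).trans (le_max_right _ _)⟩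
  have hCφpos : (0:ℝ) < Cφ := lt_of_lt_of_le one_pos h1Cφ
  -- second derivative bound
  obtain ⟨C2, hC2nn, hC2⟩ : ∃ C2, 0 ≤ C2 ∧ ∀ y ∈ closedBall a δ₁, ‖H y‖ ≤ C2 := by
    obtain ⟨y₁, -, hy₁⟩ := hKcomp.exists_isMaxOn hKne (continuous_norm.comp_continuousOn (f := H) (by exact hHcont.mono hKT))
    exact ⟨‖H y₁‖, ContinuousLinearMap.opNorm_nonneg _, fun y hy => hy₁ hy⟩
  obtain ⟨ε, hεpos, hεsmall⟩ : ∃ ε, 0 < ε ∧ ε * (C2 * Cφ ^ 2) ≤ 1 := by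
    refine ⟨(Cφ ^ 2 * (C2 + 1))⁻¹, by positivity, ?_⟩
    rw [inv_mul_le_iff₀ (by positivity)]
    nlinarith [pow_pos hCφpos 2]
  -- choose δ
  obtain ⟨δ, hδpos, hδle, hψε⟩ :
      ∃ δ, 0 < δ ∧ δ ≤ δ₁ ∧ ∀ y ∈ ball a δ, ‖e.symm y - c‖ ≤ ε := by
    have htend : Filter.Tendsto (e.symm : E → E) (𝓝 a) (𝓝 c) := by
      have h12 := (e.continuousOn_symm.continuousAt (e.open_target.mem_nhds ha)).tendsto
      rwa [hψa] at h12
    have hev : ∀ᶠ y in 𝓝 a, ‖e.symm y - c‖ < ε := by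
      filter_upwards [htend (Metric.ball_mem_nhds c hεpos)] with y hy
      simpa [dist_eq_norm] using hy
    obtain ⟨δ₀, hδ₀, hδball⟩ := Metric.eventually_nhds_iff_ball.mp hev
    exact ⟨min δ₀ δ₁, lt_min hδ₀ hδ₁, min_le_right _ _,
      fun y hy => (hδball y (ball_subset_ball (min_le_left _ _) hy)).le⟩
  have hWK : ball a δ ⊆ closedBall a δ₁ :=
    (ball_subset_ball hδle).trans ball_subset_closedBall
  have hWT : ball a δ ⊆ e.target := hWK.trans hKT
  -- convexity of g on the ball
  have hg : ConvexOn ℝ (ball a δ) (fun y => ‖e.symm y - c‖ ^ 2) := by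
    refine convexOn_normsq_comp _ _ (convex_ball a δ) c G H
      (fun y hy => hψdiff y (hWT hy)) (fun y hy => hGdiff y (hWT hy))
      (e.continuousOn_symm.mono hWT) Cφ C2 ε hCφpos hC2nn hεpos
      ?_ (fun y hy => hC2 y (hWK hy)) hεsmall hψε
    intro y hy v
    calc ‖v‖ = ‖(F (e.symm y)) ((G y) v)‖ := by rw [key y (hWT hy) v]
    _ ≤ ‖F (e.symm y)‖ * ‖(G y) v‖ := ContinuousLinearMap.le_opNorm _ _
    _ ≤ Cφ * ‖(G y) v‖ := mul_le_mul_of_nonneg_right (hCφ _ (hWK hy)) (norm_nonneg _)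
  -- conclude
  have hO : IsOpen (e.source ∩ (e : E → E) ⁻¹' (ball a δ)) :=
    e.isOpen_inter_preimage isOpen_ball
  have hcO : c ∈ e.source ∩ (e : E → E) ⁻¹' (ball a δ) := by
    refine ⟨hc, ?_⟩
    rw [mem_preimage, hac]
    exact mem_ball_self hδpos
  obtain ⟨s₀, hs₀, hs₀O⟩ := Metric.isOpen_iff.1 hO c hcO
  filter_upwards [Ioo_mem_nhdsGT_of_mem (⟨le_refl (0:ℝ), hs₀⟩ : (0:ℝ) ∈ Ico (0:ℝ) s₀)] with r hr
  have hrpos : 0 < r := hr.1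
  have hBO : closedBall c r ⊆ e.source ∩ (e : E → E) ⁻¹' (ball a δ) :=
    (closedBall_subset_ball hr.2).trans hs₀O
  refine ⟨hBO.trans inter_subset_left, ?_⟩
  have himg : e '' closedBall c r = {y ∈ ball a δ | ‖e.symm y - c‖ ^ 2 ≤ r ^ 2} := by
    ext y; constructor
    · rintro ⟨x, hx, rfl⟩
      have hxO := hBO hx
      refine ⟨hxO.2, ?_⟩
      have hinv : e.symm (e x) = x := e.left_inv hxO.1
      have hxn : ‖x - c‖ ≤ r := mem_closedBall_iff_norm.mp hx
      rw [hinv]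
      exact pow_le_pow_left₀ (norm_nonneg _) hxn 2
    · rintro ⟨hyW, hyg⟩
      have hyT : y ∈ e.target := hWT hyW
      refine ⟨e.symm y, ?_, e.right_inv hyT⟩
      rw [mem_closedBall_iff_norm]
      exact le_of_pow_le_pow_left₀ two_ne_zero hrpos.le hyg
  rw [himg]
  exact hg.convex_le (r ^ 2)


section GoodCover

theorem good_cover_aux (d : ℕ) (M : Type*) [TopologicalSpace M] [T2Space M]
    [SecondCountableTopology M]
    [ChartedSpace (EuclideanSpace ℝ (Fin d)) M]
    [IsManifold (𝓡 d) (⊤ : ℕ∞) M] :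
    ∃ 𝒰 : Set (Set M),
      (∀ U ∈ 𝒰, IsClosed U) ∧
      (⋃ U ∈ 𝒰, interior U = Set.univ) ∧
      ∀ 𝒱 ⊆ 𝒰, 𝒱.Finite → 𝒱.Nonempty →
        (⋂₀ 𝒱 = (∅ : Set M)) ∨ ContractibleSpace (⋂₀ 𝒱 : Set M) := by
  classical
  haveI : LocallyCompactSpace M := ChartedSpace.locallyCompactSpace (EuclideanSpace ℝ (Fin d)) M
  -- a locally finite closed cover subordinate to the charts
  obtain ⟨w, hwo, hwu, hwlf, hws⟩ := precise_refinement (X := M) (ι := M)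
    (fun i => (chartAt (EuclideanSpace ℝ (Fin d)) i).source)
    (fun i => (chartAt (EuclideanSpace ℝ (Fin d)) i).open_source)
    (by rw [eq_univ_iff_forall]; exact fun x => mem_iUnion.2 ⟨x, mem_chart_source (EuclideanSpace ℝ (Fin d)) x⟩)
  obtain ⟨vv, hvu, hvo, hvcl⟩ := exists_subset_iUnion_closure_subset (u := w)
    isClosed_univ hwo (fun x _ => hwlf.point_finite x) (by rw [hwu])
  set C : M → Set M := fun i => closure (vv i) with hC_def
  have hCcl : ∀ i, IsClosed (C i) := fun i => isClosed_closure
  have hCsub : ∀ i, C i ⊆ (chartAt (EuclideanSpace ℝ (Fin d)) i).source := fun i => (hvcl i).trans (hws i)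
  have hCcov : ∀ x : M, ∃ i, x ∈ C i := by
    intro x
    obtain ⟨i, hi⟩ := mem_iUnion.1 (hvu (mem_univ x))
    exact ⟨i, subset_closure hi⟩
  have hClf : LocallyFinite C := hwlf.subset fun i => hvcl i
  -- smoothness of transition maps
  have htrans : ∀ i j : M,
      ContDiffOn ℝ ∞ ((chartAt (EuclideanSpace ℝ (Fin d)) i).symm.trans (chartAt (EuclideanSpace ℝ (Fin d)) j))
        ((chartAt (EuclideanSpace ℝ (Fin d)) i).symm.trans (chartAt (EuclideanSpace ℝ (Fin d)) j)).source ∧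
      ContDiffOn ℝ ∞ (((chartAt (EuclideanSpace ℝ (Fin d)) i).symm.trans (chartAt (EuclideanSpace ℝ (Fin d)) j)).symm)
        (((chartAt (EuclideanSpace ℝ (Fin d)) i).symm.trans (chartAt (EuclideanSpace ℝ (Fin d)) j)).target) := by
    intro i j
    have hmem := HasGroupoid.compatible (G := contDiffGroupoid ∞ (𝓡 d))
      (chart_mem_atlas (EuclideanSpace ℝ (Fin d)) i) (chart_mem_atlas (EuclideanSpace ℝ (Fin d)) j)
    rw [contDiffGroupoid, mem_groupoid_of_pregroupoid] at hmem
    constructor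
    · have h1 := hmem.1
      simpa [contDiffPregroupoid] using h1
    · have h2 := hmem.2
      simpa [contDiffPregroupoid] using h2
  -- construction of a good ball around every point
  have main : ∀ q : M, ∃ B : Set M, IsClosed B ∧ q ∈ interior B ∧
      ∀ i : M, (B ∩ C i).Nonempty → B ⊆ (chartAt (EuclideanSpace ℝ (Fin d)) i).source ∧
        Convex ℝ ((chartAt (EuclideanSpace ℝ (Fin d)) i) '' B) := by
    intro q
    obtain ⟨Ω, hΩnhds, hNfin⟩ := hClf q
    set e := chartAt (EuclideanSpace ℝ (Fin d)) q with he_def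
    set c := e q with hc_def
    set N' : Set M := {i | (C i ∩ Ω).Nonempty ∧ q ∈ (chartAt (EuclideanSpace ℝ (Fin d)) i).source} with hN'_def
    set Bad : Set M := {i | (C i ∩ Ω).Nonempty ∧ q ∉ (chartAt (EuclideanSpace ℝ (Fin d)) i).source} with hBad_def
    have hN'fin : N'.Finite := hNfin.subset fun i hi => hi.1
    have hBadfin : Bad.Finite := hNfin.subset fun i hi => hi.1
    set Ω' : Set M := interior Ω \ ⋃ i ∈ Bad, C i with hΩ'_def
    have hΩ'open : IsOpen Ω' :=
      isOpen_interior.sdiff (hBadfin.isClosed_biUnion fun i _ => hCcl i)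
    have hqΩ' : q ∈ Ω' := by
      refine ⟨mem_interior_iff_mem_nhds.2 hΩnhds, ?_⟩
      rw [mem_iUnion₂]
      rintro ⟨i, hiBad, hiq⟩
      exact hiBad.2 (hCsub i hiq)
    -- eventual conditions on the radius
    have cond1 : ∀ᶠ r in 𝓝[>] (0:ℝ),
        closedBall c r ⊆ e.target ∩ e.symm ⁻¹' Ω' := by
      have hO : IsOpen (e.target ∩ e.symm ⁻¹' Ω') :=
        e.isOpen_inter_preimage_symm hΩ'open
      have hcO : c ∈ e.target ∩ e.symm ⁻¹' Ω' := by
        refine ⟨e.map_source (mem_chart_source (EuclideanSpace ℝ (Fin d)) q), ?_⟩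
        rw [mem_preimage, hc_def, e.left_inv (mem_chart_source (EuclideanSpace ℝ (Fin d)) q)]
        exact hqΩ'
      obtain ⟨s₀, hs₀, hs₀O⟩ := Metric.isOpen_iff.1 hO c hcO
      filter_upwards [Ioo_mem_nhdsGT_of_mem
        (⟨le_refl (0:ℝ), hs₀⟩ : (0:ℝ) ∈ Ico (0:ℝ) s₀)] with r hr
      exact (closedBall_subset_ball hr.2).trans hs₀O
    have cond2 : ∀ᶠ r in 𝓝[>] (0:ℝ), ∀ i ∈ N',
        closedBall c r ⊆ (e.symm.trans (chartAt (EuclideanSpace ℝ (Fin d)) i)).source ∧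
          Convex ℝ ((e.symm.trans (chartAt (EuclideanSpace ℝ (Fin d)) i)) '' closedBall c r) := by
      rw [eventually_all_finite hN'fin]
      intro i hi
      apply convex_image_closedBall_eventually _ (htrans q i).1 (htrans q i).2
      rw [OpenPartialHomeomorph.trans_source]
      constructor
      · rw [OpenPartialHomeomorph.symm_source]
        exact e.map_source (mem_chart_source (EuclideanSpace ℝ (Fin d)) q)
      · rw [mem_preimage, hc_def, e.left_inv (mem_chart_source (EuclideanSpace ℝ (Fin d)) q)]
        exact hi.2
    have cond0 : ∀ᶠ r in 𝓝[>] (0:ℝ), 0 < r := self_mem_nhdsWithin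
    obtain ⟨r, hr0, hr1, hr2⟩ := (cond0.and (cond1.and cond2)).exists
    have hballT : closedBall c r ⊆ e.target := hr1.trans inter_subset_left
    refine ⟨e.symm '' closedBall c r, ?_, ?_, ?_⟩
    · exact ((isCompact_closedBall c r).image_of_continuousOn
        (e.continuousOn_symm.mono hballT)).isClosed
    · have hopen : IsOpen (e.symm '' ball c r) :=
        e.symm.isOpen_image_of_subset_source isOpen_ball
          (by rw [OpenPartialHomeomorph.symm_source]; exact ball_subset_closedBall.trans hballT)
      have hqmem : q ∈ e.symm '' ball c r :=
        ⟨c, mem_ball_self hr0, e.left_inv (mem_chart_source (EuclideanSpace ℝ (Fin d)) q)⟩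
      exact interior_maximal (image_mono ball_subset_closedBall) hopen hqmem
    · intro i hne
      obtain ⟨x, hxB, hxC⟩ := hne
      have hBΩ' : e.symm '' closedBall c r ⊆ Ω' := by
        rintro - ⟨y, hy, rfl⟩
        exact (hr1 hy).2
      have hiN : (C i ∩ Ω).Nonempty :=
        ⟨x, hxC, interior_subset (hBΩ' hxB).1⟩
      have hqi : q ∈ (chartAt (EuclideanSpace ℝ (Fin d)) i).source := by
        by_contra hqi
        have hxΩ' := hBΩ' hxB
        exact hxΩ'.2 (mem_iUnion₂.2 ⟨i, ⟨hiN, hqi⟩, hxC⟩)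
      have hiN' : i ∈ N' := ⟨hiN, hqi⟩
      obtain ⟨hsub, hconv⟩ := hr2 i hiN'
      have hBsource : e.symm '' closedBall c r ⊆ (chartAt (EuclideanSpace ℝ (Fin d)) i).source := by
        rintro - ⟨y, hy, rfl⟩
        have := hsub hy
        rw [OpenPartialHomeomorph.trans_source] at this
        exact this.2
      refine ⟨hBsource, ?_⟩
      have himg : (chartAt (EuclideanSpace ℝ (Fin d)) i) '' (e.symm '' closedBall c r)
          = (e.symm.trans (chartAt (EuclideanSpace ℝ (Fin d)) i)) '' closedBall c r := by
        rw [OpenPartialHomeomorph.coe_trans, Set.image_comp]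
      rw [himg]
      exact hconv
  choose B hBcl hBint hBprop using main
  refine ⟨Set.range B, ?_, ?_, ?_⟩
  · rintro U ⟨q, rfl⟩
    exact hBcl q
  · rw [eq_univ_iff_forall]
    intro x
    exact mem_iUnion₂.2 ⟨B x, ⟨x, rfl⟩, hBint x⟩
  · intro 𝒱 h𝒱sub h𝒱fin h𝒱ne
    by_cases hint : ⋂₀ 𝒱 = (∅ : Set M)
    · exact Or.inl hint
    right
    obtain ⟨x, hx⟩ := nonempty_iff_ne_empty.2 hint
    obtain ⟨i₀, hi₀⟩ := hCcov x
    set ch := chartAt (EuclideanSpace ℝ (Fin d)) i₀ with hch_def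
    have hkey : ∀ V ∈ 𝒱, V ⊆ ch.source ∧ Convex ℝ (ch '' V) := by
      intro V hV
      obtain ⟨q, rfl⟩ := h𝒱sub hV
      exact hBprop q i₀ ⟨x, hx _ hV, hi₀⟩
    obtain ⟨V₀, hV₀⟩ := h𝒱ne
    have hsub : ⋂₀ 𝒱 ⊆ ch.source :=
      (sInter_subset_of_mem hV₀).trans (hkey _ hV₀).1
    have himg : ch '' (⋂₀ 𝒱) = ⋂ V ∈ 𝒱, ch '' V := by
      apply Subset.antisymm (image_sInter_subset 𝒱 ch)
      intro y hy
      rw [mem_iInter₂] at hy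
      obtain ⟨x₀, hx₀, hx₀y⟩ := hy V₀ hV₀
      refine ⟨x₀, ?_, hx₀y⟩
      rw [mem_sInter]
      intro V hV
      obtain ⟨xV, hxV, hxVy⟩ := hy V hV
      have hxVx₀ : xV = x₀ :=
        ch.injOn ((hkey V hV).1 hxV) ((hkey V₀ hV₀).1 hx₀) (hxVy.trans hx₀y.symm)
      exact hxVx₀ ▸ hxV
    have hconv : Convex ℝ (ch '' (⋂₀ 𝒱)) := by
      rw [himg]
      exact convex_iInter fun V => convex_iInter fun hV => (hkey V hV).2
    have hne : (ch '' (⋂₀ 𝒱)).Nonempty := ⟨ch x, x, hx, rfl⟩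
    haveI hcontr : ContractibleSpace (ch '' (⋂₀ 𝒱) : Set (EuclideanSpace ℝ (Fin d))) :=
      hconv.contractibleSpace hne
    have hinvmem : ∀ y : (ch '' (⋂₀ 𝒱) : Set (EuclideanSpace ℝ (Fin d))), ch.symm y.1 ∈ ⋂₀ 𝒱 := by
      rintro ⟨-, x', hx', rfl⟩
      rwa [ch.left_inv (hsub hx')]
    let F : (⋂₀ 𝒱 : Set M) ≃ₜ (ch '' (⋂₀ 𝒱) : Set (EuclideanSpace ℝ (Fin d))) :=
      { toFun := fun z => ⟨ch z.1, mem_image_of_mem _ z.2⟩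
        invFun := fun y => ⟨ch.symm y.1, hinvmem y⟩
        left_inv := fun z => Subtype.ext (ch.left_inv (hsub z.2))
        right_inv := by
          rintro ⟨-, x', hx', rfl⟩
          apply Subtype.ext
          show ch (ch.symm (ch x')) = ch x'
          rw [ch.left_inv (hsub hx')]
        continuous_toFun := by
          apply Continuous.subtype_mk
          exact ch.continuousOn.comp_continuous continuous_subtype_val fun z => hsub z.2
        continuous_invFun := by
          apply Continuous.subtype_mk
          apply ch.continuousOn_symm.comp_continuous continuous_subtype_val
          rintro ⟨-, x', hx', rfl⟩
          exact ch.map_source (hsub hx') }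
    exact F.contractibleSpace

end GoodCover

end

open scoped Manifold

/-- **Existence of a good closed cover** (Proposition `prop:strAcycl` of the paper):
every second-countable Hausdorff finite-dimensional smooth real manifold without
boundary admits a family `𝒰` of closed subsets whose interiors cover the manifold and
such that any nonempty finite intersection of members of `𝒰` is empty or contractible
(in particular, empty or acyclic); that is, it has a good closed cover. -/
theorem exists_good_closed_cover
    (d : ℕ) (M : Type*) [TopologicalSpace M] [T2Space M]
    [SecondCountableTopology M]
    [ChartedSpace (EuclideanSpace ℝ (Fin d)) M]
    [IsManifold (𝓡 d) (⊤ : ℕ∞) M] :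
    ∃ 𝒰 : Set (Set M),
      (∀ U ∈ 𝒰, IsClosed U) ∧
      (⋃ U ∈ 𝒰, interior U = Set.univ) ∧
      ∀ 𝒱 ⊆ 𝒰, 𝒱.Finite → 𝒱.Nonempty →
        (⋂₀ 𝒱 = (∅ : Set M)) ∨ ContractibleSpace (⋂₀ 𝒱 : Set M) := by
  exact good_cover_aux d M
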